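/- Suppose each f_t : ℝ^d → ℝ is convex and differentiable with g_t = ∇f_t(w_t), the iterates follow w_{t+1} = w_t - η_t ĝ_t with η_t > 0 nonincreasing, ε_t = g_t - ĝ_t, and all iterates and w* lie in a set where ‖w_p - w_q‖_∞ ≤ D_∞. Then the regret R(T) = Σ_{t=1}^T (f_t(w_t) - f_t(w*)) satisfies R(T) ≤ d·D_∞²/(2η_T) + D_∞·√d·Σ_{t=1}^T ‖ε_t‖ + Σ_{t=1}^T (η_t/2)‖ĝ_t‖². -/

import Mathlib

open RealInnerProductSpace Finset Topology Filter

lemma convex_grad_ineq {E : Type*} [NormedAddCommGroup E] [InnerProductSpace ℝ E] [CompleteSpace E]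
    {f : E → ℝ} {x gx : E} (hc : ConvexOn ℝ Set.univ f) (hg : HasGradientAt f gx x)
    (y : E) : f x - f y ≤ ⟪gx, x - y⟫ := by
  -- directional derivative along v = y - x
  set v := y - x with hv
  have hline : HasDerivAt (fun s : ℝ => x + s • v) v 0 := by
    simpa using ((hasDerivAt_id (0:ℝ)).smul_const v).const_add x
  have hφ : HasDerivAt (fun s : ℝ => f (x + s • v)) ⟪gx, v⟫ 0 := by
    have hfd : HasFDerivAt f ((InnerProductSpace.toDual ℝ E) gx) (x + (0:ℝ) • v) := by
      simpa using hasGradientAt_iff_hasFDerivAt.mp hg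
    have := hfd.comp_hasDerivAt 0 hline
    rw [InnerProductSpace.toDual_apply_apply] at this
    exact this
  have hslope : Filter.Tendsto (slope (fun s : ℝ => f (x + s • v)) 0) (𝓝[>] 0)
      (𝓝 ⟪gx, v⟫) :=
    (hasDerivAt_iff_tendsto_slope.mp hφ).mono_left
      (nhdsWithin_mono _ (fun s hs => ne_of_gt hs))
  have hle : ⟪gx, v⟫ ≤ f y - f x := by
    refine le_of_tendsto hslope ?_
    filter_upwards [Ioc_mem_nhdsGT (zero_lt_one)] with s hs
    have hs0 : 0 < s := hs.1
    have hcomb : f (x + s • v) ≤ (1 - s) * f x + s * f y := by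
      have := hc.2 (Set.mem_univ x) (Set.mem_univ y) (by linarith [hs.2] : (0:ℝ) ≤ 1 - s)
        hs0.le (by ring)
      have hxy : (1 - s) • x + s • y = x + s • v := by
        rw [hv]; module
      simpa [hxy] using this
    rw [slope_def_field]
    simp only [zero_smul, add_zero, sub_zero]
    rw [div_le_iff₀ hs0]
    nlinarith [hcomb]
  have : ⟪gx, x - y⟫ = - ⟪gx, v⟫ := by rw [hv, ← inner_neg_right]; rw [neg_sub]
  linarith [hle, this.ge, this.le]

lemma telescope_bound (a η : ℕ → ℝ) (C : ℝ)
    (hηpos : ∀ t, 0 < η t) (hmono : ∀ s t, s ≤ t → η t ≤ η s)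
    (ha : ∀ t, 0 ≤ a t) (haC : ∀ t, a t ≤ C) :
    ∀ T, ∑ t ∈ Icc 1 T, (a t - a (t+1)) / (2 * η t) ≤ (C - a (T+1)) / (2 * η T) := by
  intro T
  induction T with
  | zero =>
    rw [show Icc 1 0 = (∅ : Finset ℕ) by rfl, sum_empty]
    exact div_nonneg (by linarith [haC 1]) (by linarith [hηpos 0])
  | succ n ih =>
    rw [Finset.sum_Icc_succ_top (by omega : 1 ≤ n + 1)]
    have h1 : (C - a (n+1)) / (2 * η n) ≤ (C - a (n+1)) / (2 * η (n+1)) := by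
      gcongr
      · linarith [haC (n+1)]
      · linarith [hηpos (n+1)]
      · linarith [hmono n (n+1) (by omega)]
    have h2 : (C - a (n+1)) / (2 * η (n+1)) + (a (n+1) - a (n+2)) / (2 * η (n+1))
        = (C - a (n+2)) / (2 * η (n+1)) := by
      field_simp
      ring
    calc _ ≤ (C - a (n+1)) / (2 * η n) + (a (n+1) - a (n+2)) / (2 * η (n+1)) := by
            linarith [ih]
      _ ≤ _ := by rw [← h2]; linarith [h1]

/-- Regret bound for SGD with quantized gradients (Theorem 1 of the paper):
convex differentiable losses `f t`, updates `w (t+1) = w t - η t • ĝ t` with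
positive nonincreasing learning rates, quantization errors `ε t = g t - ĝ t`,
and all iterates and the comparator `w*` within ℓ∞-distance `D∞` of each other.
Then `R(T) ≤ d·D∞²/(2 η T) + D∞·√d·Σ‖ε t‖ + Σ (η t / 2)‖ĝ t‖²`. -/
theorem int8_training_regret_bound {d : ℕ} (T : ℕ)
    (f : ℕ → EuclideanSpace ℝ (Fin d) → ℝ)
    (w g ghat ε : ℕ → EuclideanSpace ℝ (Fin d))
    (wstar : EuclideanSpace ℝ (Fin d)) (η : ℕ → ℝ) (D : ℝ) (hD : 0 ≤ D)
    (hconv : ∀ t, ConvexOn ℝ Set.univ (f t))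
    (hgrad : ∀ t, HasGradientAt (f t) (g t) (w t))
    (hupd : ∀ t, w (t + 1) = w t - η t • ghat t)
    (hηpos : ∀ t, 0 < η t)
    (hηmono : ∀ s t, s ≤ t → η t ≤ η s)
    (hε : ∀ t, ε t = g t - ghat t)
    (hdiam : ∀ p q i, |w p i - w q i| ≤ D)
    (hdiamstar : ∀ t i, |w t i - wstar i| ≤ D) :
    ∑ t ∈ Icc 1 T, (f t (w t) - f t wstar) ≤
      d * D ^ 2 / (2 * η T)
        + D * Real.sqrt d * ∑ t ∈ Icc 1 T, ‖ε t‖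
        + ∑ t ∈ Icc 1 T, η t / 2 * ‖ghat t‖ ^ 2 := by
  have hnormsq : ∀ t, ‖w t - wstar‖ ^ 2 ≤ d * D ^ 2 := by
    intro t
    rw [EuclideanSpace.norm_eq, Real.sq_sqrt (by positivity)]
    calc ∑ i, ‖(w t - wstar) i‖ ^ 2 ≤ ∑ _i : Fin d, D ^ 2 := by
          apply Finset.sum_le_sum; intro i _
          have h1 : ‖(w t - wstar) i‖ = |w t i - wstar i| := by
            simp [Real.norm_eq_abs]
          rw [h1]
          exact pow_le_pow_left₀ (abs_nonneg _) (hdiamstar t i) 2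
      _ = d * D ^ 2 := by simp [Finset.sum_const]
  have hnorm : ∀ t, ‖w t - wstar‖ ≤ Real.sqrt d * D := by
    intro t
    have h1 : Real.sqrt d * D = Real.sqrt (d * D ^ 2) := by
      rw [Real.sqrt_mul (Nat.cast_nonneg d), Real.sqrt_sq hD]
    rw [h1, show ‖w t - wstar‖ = Real.sqrt (‖w t - wstar‖ ^ 2) from
      (Real.sqrt_sq (norm_nonneg _)).symm]
    exact Real.sqrt_le_sqrt (hnormsq t)
  have hstep : ∀ t, f t (w t) - f t wstar ≤
      (‖w t - wstar‖ ^ 2 - ‖w (t+1) - wstar‖ ^ 2) / (2 * η t)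
      + D * Real.sqrt d * ‖ε t‖ + η t / 2 * ‖ghat t‖ ^ 2 := by
    intro t
    have h1 := convex_grad_ineq (hconv t) (hgrad t) wstar
    have hkey : ‖w (t+1) - wstar‖ ^ 2 = ‖w t - wstar‖ ^ 2
        - 2 * η t * ⟪ghat t, w t - wstar⟫ + η t ^ 2 * ‖ghat t‖ ^ 2 := by
      rw [hupd t, sub_right_comm, norm_sub_sq_real]
      have h2 : ⟪w t - wstar, η t • ghat t⟫ = η t * ⟪ghat t, w t - wstar⟫ := by
        rw [real_inner_smul_right, real_inner_comm]
      rw [h2, norm_smul, mul_pow, Real.norm_eq_abs, sq_abs]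
      ring
    have hghat : ⟪ghat t, w t - wstar⟫
        = (‖w t - wstar‖ ^ 2 - ‖w (t+1) - wstar‖ ^ 2) / (2 * η t)
          + η t / 2 * ‖ghat t‖ ^ 2 := by
      have hne : η t ≠ 0 := (hηpos t).ne'
      set I := ⟪ghat t, w t - wstar⟫ with hI
      field_simp
      nlinarith [hkey]
    have hεb : ⟪ε t, w t - wstar⟫ ≤ D * Real.sqrt d * ‖ε t‖ := by
      calc ⟪ε t, w t - wstar⟫ ≤ ‖ε t‖ * ‖w t - wstar‖ := real_inner_le_norm _ _
        _ ≤ ‖ε t‖ * (Real.sqrt d * D) :=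
            mul_le_mul_of_nonneg_left (hnorm t) (norm_nonneg _)
        _ = D * Real.sqrt d * ‖ε t‖ := by ring
    have hsplit : ⟪g t, w t - wstar⟫
        = ⟪ghat t, w t - wstar⟫ + ⟪ε t, w t - wstar⟫ := by
      rw [hε t, inner_sub_left]; ring
    linarith
  calc ∑ t ∈ Icc 1 T, (f t (w t) - f t wstar)
      ≤ ∑ t ∈ Icc 1 T, ((‖w t - wstar‖ ^ 2 - ‖w (t+1) - wstar‖ ^ 2) / (2 * η t)
          + D * Real.sqrt d * ‖ε t‖ + η t / 2 * ‖ghat t‖ ^ 2) :=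
        Finset.sum_le_sum (fun t _ => hstep t)
    _ = (∑ t ∈ Icc 1 T, (‖w t - wstar‖ ^ 2 - ‖w (t+1) - wstar‖ ^ 2) / (2 * η t))
        + D * Real.sqrt d * ∑ t ∈ Icc 1 T, ‖ε t‖
        + ∑ t ∈ Icc 1 T, η t / 2 * ‖ghat t‖ ^ 2 := by
        rw [Finset.sum_add_distrib, Finset.sum_add_distrib, Finset.mul_sum]
    _ ≤ _ := by
        have htel := telescope_bound (fun t => ‖w t - wstar‖ ^ 2) η (d * D ^ 2)
          hηpos hηmono (fun t => by positivity) hnormsq T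
        have h0 : (0:ℝ) ≤ ‖w (T+1) - wstar‖ ^ 2 := by positivity
        have hfin : (d * D ^ 2 - ‖w (T+1) - wstar‖ ^ 2) / (2 * η T)
            ≤ d * D ^ 2 / (2 * η T) := by
          gcongr
          · linarith [hηpos T]
          · linarith
        have := le_trans htel hfin
        linarith
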